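/- Consider k ≥ 1 districts, each a nonempty finite set of agents with real positions, all districts of size λ. Let w be the average position of the agents in some district d_w. Then for every o ∈ ℝ, max over districts d of ∑_{i ∈ d} |x_i - w| ≤ 2 · max over districts d of ∑_{i ∈ d} |x_i - o|. (Distortion of Arbitrary-of-Avg for Max-of-Sum is at most 2.) -/

import Mathlib

/-- Distortion of Arbitrary-of-Avg for Max-of-Sum is at most 2. -/
theorem stmt_5 {ι : Type*} [Fintype ι] (k lam : ℕ) (hk : 0 < lam)
    (hne : (Finset.univ : Finset (Fin k)).Nonempty)
    (D : Fin k → Finset ι)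
    (hdisj : ∀ j j' : Fin k, j ≠ j' → Disjoint (D j) (D j'))
    (hcard : ∀ j, (D j).card = lam)
    (x : ι → ℝ) (dw : Fin k) (w : ℝ)
    (hw : w = (∑ i ∈ D dw, x i) / lam) (o : ℝ) :
    Finset.univ.sup' hne (fun j => ∑ i ∈ D j, |x i - w|)
      ≤ 2 * Finset.univ.sup' hne (fun j => ∑ i ∈ D j, |x i - o|) := by
  set M := Finset.univ.sup' hne (fun j => ∑ i ∈ D j, |x i - o|) with hM
  have hlam : (0:ℝ) < lam := by exact_mod_cast hk
  have hMj : ∀ j, ∑ i ∈ D j, |x i - o| ≤ M :=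
    fun j => Finset.le_sup' (fun j => ∑ i ∈ D j, |x i - o|) (Finset.mem_univ j)
  have hwo : (lam : ℝ) * |w - o| ≤ M := by
    have : (lam : ℝ) * (w - o) = ∑ i ∈ D dw, (x i - o) := by
      rw [Finset.sum_sub_distrib, Finset.sum_const, hcard dw, hw]
      field_simp
      rw [nsmul_eq_mul]
    calc (lam : ℝ) * |w - o| = |∑ i ∈ D dw, (x i - o)| := by
          rw [← this, abs_mul, abs_of_pos hlam]
      _ ≤ ∑ i ∈ D dw, |x i - o| := Finset.abs_sum_le_sum_abs _ _
      _ ≤ M := hMj dw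
  apply Finset.sup'_le
  intro j _
  calc ∑ i ∈ D j, |x i - w| ≤ ∑ i ∈ D j, (|x i - o| + |w - o|) := by
        apply Finset.sum_le_sum
        intro i _
        have := abs_sub_le (x i) o w
        simpa [abs_sub_comm o w] using this
    _ = (∑ i ∈ D j, |x i - o|) + (lam : ℝ) * |w - o| := by
        rw [Finset.sum_add_distrib, Finset.sum_const, hcard j]
        ring
    _ ≤ M + M := add_le_add (hMj j) hwo
    _ = 2 * M := by ring
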